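/- Let f: [0,1]² → [0,1] satisfy the Hölder condition |f(x,y) − f(x',y')| ≤ M(|x−x'| + |y−y'|)^α with α ∈ (0,1]. Let ξ_1,...,ξ_n ∈ [0,1] be arbitrary, and let z*: [n] → [k] assign i to the index a such that ξ_i ∈ [(a−1)/k, a/k). Let θ_{ij} = f(ξ_i, ξ_j) for i ≠ j, and let θ̄_{ab} denote the average of θ_{ij} over pairs i ≠ j with z*(i)=a, z*(j)=b. Then (1/n²) Σ_{a,b} Σ_{i≠j: z*(i)=a, z*(j)=b} (θ_{ij} − θ̄_{ab})² ≤ C M² (1/k²)^α for a universal constant C. -/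

import Mathlib

open Finset

/-- Block approximation of a Hölder graphon: partitioning [0,1] into k intervals and
averaging f over the induced blocks incurs squared error at most C·M²·(1/k²)^α. -/
theorem holder_block_approximation :
    ∃ C : ℝ, 0 < C ∧
    ∀ (n k : ℕ) (α M : ℝ) (f : ℝ → ℝ → ℝ) (ξ : Fin n → ℝ) (z : Fin n → Fin k),
      0 < n → 0 < k → k ≤ n → 0 < α → α ≤ 1 → 0 < M →
      (∀ x ∈ Set.Icc (0:ℝ) 1, ∀ y ∈ Set.Icc (0:ℝ) 1, f x y ∈ Set.Icc (0:ℝ) 1) →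
      (∀ x ∈ Set.Icc (0:ℝ) 1, ∀ y ∈ Set.Icc (0:ℝ) 1, ∀ x' ∈ Set.Icc (0:ℝ) 1,
        ∀ y' ∈ Set.Icc (0:ℝ) 1,
        |f x y - f x' y'| ≤ M * (|x - x'| + |y - y'|) ^ α) →
      (∀ i, ξ i ∈ Set.Icc (0:ℝ) 1) →
      (∀ i, ((z i : ℕ) : ℝ) / k ≤ ξ i ∧ ξ i ≤ (((z i : ℕ) : ℝ) + 1) / k) →
      (1 / (n:ℝ)^2) * ∑ a : Fin k, ∑ b : Fin k,
          ∑ p ∈ Finset.univ.filter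
              (fun p : Fin n × Fin n => p.1 ≠ p.2 ∧ z p.1 = a ∧ z p.2 = b),
            (f (ξ p.1) (ξ p.2) -
              (∑ q ∈ Finset.univ.filter
                  (fun q : Fin n × Fin n => q.1 ≠ q.2 ∧ z q.1 = a ∧ z q.2 = b),
                f (ξ q.1) (ξ q.2)) /
                ((Finset.univ.filter
                  (fun q : Fin n × Fin n => q.1 ≠ q.2 ∧ z q.1 = a ∧ z q.2 = b)).card : ℝ))^2
        ≤ C * M^2 * ((1:ℝ) / (k:ℝ)^2) ^ α := by
  refine ⟨4, by norm_num, ?_⟩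
  intro n k α M f ξ z hn hk hkn hα hα1 hM hrange hholder hξ hz
  have hkR : (0:ℝ) < k := by exact_mod_cast hk
  have hnR : (0:ℝ) < n := by exact_mod_cast hn
  set θ : Fin n × Fin n → ℝ := fun p => f (ξ p.1) (ξ p.2) with hθ
  set D : ℝ := M * (2 / k) ^ α with hDdef
  have hD0 : 0 ≤ D := by positivity
  -- same block → ξ close
  have hclose : ∀ i j : Fin n, z i = z j → |ξ i - ξ j| ≤ 1 / k := by
    intro i j hij
    obtain ⟨h1l, h1r⟩ := hz i
    obtain ⟨h2l, h2r⟩ := hz j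
    have hcast : ((z i : ℕ) : ℝ) = ((z j : ℕ) : ℝ) := by rw [hij]
    have hdiff : (((z i : ℕ) : ℝ) + 1) / k - ((z i : ℕ) : ℝ) / k = 1 / k := by
      field_simp
      ring
    rw [← hij] at h2l h2r
    rw [abs_sub_le_iff]
    constructor <;> linarith
  -- same block → values close
  have hpair : ∀ p q : Fin n × Fin n, z p.1 = z q.1 → z p.2 = z q.2 →
      |θ p - θ q| ≤ D := by
    intro p q h1 h2
    have hx := hclose _ _ h1
    have hy := hclose _ _ h2
    have hb := hholder (ξ p.1) (hξ _) (ξ p.2) (hξ _) (ξ q.1) (hξ _) (ξ q.2) (hξ _)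
    have hsum : |ξ p.1 - ξ q.1| + |ξ p.2 - ξ q.2| ≤ 2 / k := by
      have h12 : (1:ℝ)/k + 1/k = 2/k := by ring
      linarith
    have hr : (|ξ p.1 - ξ q.1| + |ξ p.2 - ξ q.2|) ^ α ≤ (2/k) ^ α :=
      Real.rpow_le_rpow (by positivity) hsum hα.le
    calc |θ p - θ q| ≤ M * (|ξ p.1 - ξ q.1| + |ξ p.2 - ξ q.2|) ^ α := hb
      _ ≤ D := by rw [hDdef]; exact mul_le_mul_of_nonneg_left hr hM.le
  -- deviation from the average within a set
  have havg : ∀ (s : Finset (Fin n × Fin n)), (∀ p ∈ s, ∀ q ∈ s, |θ p - θ q| ≤ D) →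
      ∀ p ∈ s, (θ p - (∑ q ∈ s, θ q) / s.card) ^ 2 ≤ D ^ 2 := by
    intro s hs p hp
    have hcard : (0:ℝ) < (s.card : ℝ) := by
      exact_mod_cast Finset.card_pos.mpr ⟨p, hp⟩
    have habs : |θ p - (∑ q ∈ s, θ q) / s.card| ≤ D := by
      have hrw : θ p - (∑ q ∈ s, θ q) / s.card = (∑ q ∈ s, (θ p - θ q)) / s.card := by
        rw [Finset.sum_sub_distrib, Finset.sum_const, nsmul_eq_mul]
        field_simp
      rw [hrw, abs_div, abs_of_pos hcard, div_le_iff₀ hcard]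
      calc |∑ q ∈ s, (θ p - θ q)| ≤ ∑ q ∈ s, |θ p - θ q| :=
            Finset.abs_sum_le_sum_abs _ _
        _ ≤ ∑ q ∈ s, D := Finset.sum_le_sum (fun q hq => hs p hp q hq)
        _ = D * s.card := by rw [Finset.sum_const, nsmul_eq_mul]; ring
    obtain ⟨hl, hr⟩ := abs_le.mp habs
    exact sq_le_sq' hl hr
  -- per-block bound
  have hblock : ∀ a b : Fin k,
      ∑ p ∈ Finset.univ.filter
          (fun p : Fin n × Fin n => p.1 ≠ p.2 ∧ z p.1 = a ∧ z p.2 = b),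
        (θ p -
          (∑ q ∈ Finset.univ.filter
              (fun q : Fin n × Fin n => q.1 ≠ q.2 ∧ z q.1 = a ∧ z q.2 = b), θ q) /
            ((Finset.univ.filter
              (fun q : Fin n × Fin n => q.1 ≠ q.2 ∧ z q.1 = a ∧ z q.2 = b)).card : ℝ))^2
      ≤ ((Finset.univ.filter
          (fun p : Fin n × Fin n => p.1 ≠ p.2 ∧ z p.1 = a ∧ z p.2 = b)).card : ℝ) * D^2 := by
    intro a b
    set s := Finset.univ.filter
      (fun p : Fin n × Fin n => p.1 ≠ p.2 ∧ z p.1 = a ∧ z p.2 = b) with hs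
    have hbd : ∀ p ∈ s, ∀ q ∈ s, |θ p - θ q| ≤ D := by
      intro p hp q hq
      simp only [hs, Finset.mem_filter] at hp hq
      exact hpair p q (hp.2.2.1.trans hq.2.2.1.symm) (hp.2.2.2.trans hq.2.2.2.symm)
    calc ∑ p ∈ s, (θ p - (∑ q ∈ s, θ q) / (s.card : ℝ))^2
        ≤ ∑ p ∈ s, D^2 := Finset.sum_le_sum (fun p hp => havg s hbd p hp)
      _ = (s.card : ℝ) * D^2 := by rw [Finset.sum_const, nsmul_eq_mul]
  -- total cardinality bound
  have hcards : ∑ a : Fin k, ∑ b : Fin k,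
      ((Finset.univ.filter
        (fun p : Fin n × Fin n => p.1 ≠ p.2 ∧ z p.1 = a ∧ z p.2 = b)).card : ℝ)
      ≤ (n:ℝ)^2 := by
    have h1 : ∀ a b : Fin k,
        (Finset.univ.filter (fun p : Fin n × Fin n => p.1 ≠ p.2 ∧ z p.1 = a ∧ z p.2 = b))
        = (Finset.univ.filter (fun p : Fin n × Fin n => p.1 ≠ p.2)).filter
            (fun p => (z p.1, z p.2) = (a, b)) := by
      intro a b
      rw [Finset.filter_filter]
      apply Finset.filter_congr
      intro p _
      simp [Prod.ext_iff, and_assoc]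
    have h2 := Finset.card_eq_sum_card_fiberwise
      (f := fun p : Fin n × Fin n => (z p.1, z p.2))
      (s := Finset.univ.filter (fun p : Fin n × Fin n => p.1 ≠ p.2))
      (t := Finset.univ)
      (fun p _ => Finset.mem_univ _)
    have h3 : ∑ a : Fin k, ∑ b : Fin k,
        (Finset.univ.filter
          (fun p : Fin n × Fin n => p.1 ≠ p.2 ∧ z p.1 = a ∧ z p.2 = b)).card
        = (Finset.univ.filter (fun p : Fin n × Fin n => p.1 ≠ p.2)).card := by
      rw [h2, Fintype.sum_prod_type]
      exact Finset.sum_congr rfl (fun a _ => Finset.sum_congr rfl (fun b _ => by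
        rw [h1 a b]))
    have h4 : (Finset.univ.filter (fun p : Fin n × Fin n => p.1 ≠ p.2)).card ≤ n^2 := by
      calc (Finset.univ.filter (fun p : Fin n × Fin n => p.1 ≠ p.2)).card
          ≤ (Finset.univ : Finset (Fin n × Fin n)).card := Finset.card_filter_le _ _
        _ = n * n := by simp
        _ = n^2 := (sq n).symm
    have h5 : ∑ a : Fin k, ∑ b : Fin k,
        (Finset.univ.filter
          (fun p : Fin n × Fin n => p.1 ≠ p.2 ∧ z p.1 = a ∧ z p.2 = b)).card ≤ n^2 :=
      h3 ▸ h4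
    exact_mod_cast h5
  -- D^2 small
  have hDle : D^2 ≤ 4 * M^2 * ((1:ℝ)/(k:ℝ)^2)^α := by
    have hmul : ((2:ℝ)/k)^α = 2^α * (1/k)^α := by
      rw [show (2:ℝ)/k = 2 * (1/k) by ring,
        Real.mul_rpow (by norm_num) (by positivity)]
    have h2α : (2:ℝ)^α ≤ 2 := by
      calc (2:ℝ)^α ≤ 2^(1:ℝ) := Real.rpow_le_rpow_of_exponent_le one_le_two hα1
        _ = 2 := Real.rpow_one 2
    have h2α0 : (0:ℝ) ≤ 2^α := Real.rpow_nonneg (by norm_num) _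
    have hv0 : (0:ℝ) ≤ (1/(k:ℝ))^α := Real.rpow_nonneg (by positivity) _
    have hA : ((1:ℝ)/(k:ℝ)^2)^α = (1/(k:ℝ))^(2*α) := by
      rw [show (1:ℝ)/(k:ℝ)^2 = (1/(k:ℝ))^(2:ℕ) by ring,
        ← Real.rpow_natCast (1/(k:ℝ)) 2, ← Real.rpow_mul (by positivity)]
      norm_num
    have hB : ((1/(k:ℝ))^α)^2 = (1/(k:ℝ))^(2*α) := by
      rw [← Real.rpow_natCast ((1/(k:ℝ))^α) 2, ← Real.rpow_mul (by positivity)]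
      ring_nf
    rw [hA, ← hB, hDdef, hmul]
    have hu2 : (2:ℝ)^α * 2^α ≤ 4 := by nlinarith
    have key : 0 ≤ M^2 * ((1/(k:ℝ))^α * (1/(k:ℝ))^α) * (4 - 2^α * 2^α) :=
      mul_nonneg (mul_nonneg (sq_nonneg M) (mul_nonneg hv0 hv0)) (by linarith)
    nlinarith [key]
  -- combine
  rw [one_div, inv_mul_le_iff₀ (by positivity : (0:ℝ) < (n:ℝ)^2)]
  calc ∑ a : Fin k, ∑ b : Fin k, _
      ≤ ∑ a : Fin k, ∑ b : Fin k,
          ((Finset.univ.filter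
            (fun p : Fin n × Fin n => p.1 ≠ p.2 ∧ z p.1 = a ∧ z p.2 = b)).card : ℝ) * D^2 :=
        Finset.sum_le_sum (fun a _ => Finset.sum_le_sum (fun b _ => hblock a b))
    _ = (∑ a : Fin k, ∑ b : Fin k,
          ((Finset.univ.filter
            (fun p : Fin n × Fin n => p.1 ≠ p.2 ∧ z p.1 = a ∧ z p.2 = b)).card : ℝ)) * D^2 := by
        rw [Finset.sum_mul]
        exact Finset.sum_congr rfl (fun a _ => (Finset.sum_mul _ _ _).symm)
    _ ≤ (n:ℝ)^2 * D^2 := by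
        apply mul_le_mul_of_nonneg_right hcards (by positivity)
    _ ≤ (n:ℝ)^2 * (4 * M^2 * ((1:ℝ)/(k:ℝ)^2)^α) :=
        mul_le_mul_of_nonneg_left hDle (by positivity)
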